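/- Let n be a positive integer, a ∈ ℝ, and ε ≠ 0. Suppose φ : ℝ → ℝ is three times differentiable and satisfies the ODE ε φ'''(ω) + (φ(ω)ⁿ − a/n) φ'(ω) − (1/n) φ(ω) = 0 for all ω ∈ ℝ. Then u(t,x) = t^(−1/n) φ( x − (a/n) ln t ) satisfies u_t + uⁿ u_x + ε t^(−1) u_{xxx} = 0 for all t > 0 and x ∈ ℝ. -/

import Mathlib

/-- Partial derivative in `t` of `u = u(t,x)`. -/
noncomputable def pt (u : ℝ → ℝ → ℝ) (t x : ℝ) : ℝ := deriv (fun s => u s x) t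
/-- Partial derivative in `x` of `u = u(t,x)`. -/
noncomputable def px (u : ℝ → ℝ → ℝ) (t x : ℝ) : ℝ := deriv (fun y => u t y) x
/-- Third partial derivative in `x` of `u = u(t,x)`. -/
noncomputable def pxxx (u : ℝ → ℝ → ℝ) (t x : ℝ) : ℝ := iteratedDeriv 3 (fun y => u t y) x

private lemma deriv_shift (g : ℝ → ℝ) (hg : Differentiable ℝ g) (C d : ℝ) :
    deriv (fun y => C * g (y - d)) = fun y => C * deriv g (y - d) := by
  funext y
  have h1 : HasDerivAt (fun y : ℝ => y - d) 1 y := (hasDerivAt_id y).sub_const d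
  have h2 : HasDerivAt (fun y => g (y - d)) (deriv g (y - d) * 1) y :=
    (hg (y - d)).hasDerivAt.comp y h1
  have h3 : HasDerivAt (fun y => C * g (y - d)) (C * (deriv g (y - d) * 1)) y :=
    h2.const_mul C
  simpa using h3.deriv

/-- Case 2 of Table 4: a solution of the reduced ODE
`ε φ''' + (φⁿ − a/n) φ' − (1/n) φ = 0` gives, via the ansatz
`u = t^{−1/n} φ(x − (a/n) ln t)`, a solution of `u_t + uⁿ u_x + ε t^{−1} u_{xxx} = 0`. -/
theorem stmt_8 (n : ℕ) (hn : 0 < n) (a : ℝ) (ε : ℝ) (hε : ε ≠ 0)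
    (φ : ℝ → ℝ) (hφ1 : Differentiable ℝ φ) (hφ2 : Differentiable ℝ (deriv φ))
    (hφ3 : Differentiable ℝ (deriv (deriv φ)))
    (hode : ∀ ω : ℝ, ε * deriv (deriv (deriv φ)) ω
      + (φ ω ^ n - a / (n:ℝ)) * deriv φ ω - 1 / (n:ℝ) * φ ω = 0)
    (u : ℝ → ℝ → ℝ)
    (hu : ∀ t x, u t x = t ^ (-(1:ℝ) / (n:ℝ)) * φ (x - a / (n:ℝ) * Real.log t)) :
    ∀ t, 0 < t → ∀ x : ℝ,
      pt u t x + (u t x) ^ n * px u t x + ε * t ^ (-1 : ℝ) * pxxx u t x = 0 := by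
  intro t ht x
  have hn' : (n : ℝ) ≠ 0 := Nat.cast_ne_zero.mpr hn.ne'
  have ht' : t ≠ 0 := ht.ne'
  set c0 : ℝ := -(1:ℝ) / (n:ℝ) with hc0
  set b : ℝ := a / (n:ℝ) with hb
  set d : ℝ := b * Real.log t with hd
  set ω : ℝ := x - d with hω
  set P : ℝ := t ^ c0 with hP
  -- spatial derivatives
  have hux : (fun y => u t y) = fun y => P * φ (y - d) := by
    funext y; rw [hu]
  have hpx : px u t x = P * deriv φ ω := by
    rw [px, hux, deriv_shift φ hφ1 P d]
  have hpxxx : pxxx u t x = P * deriv (deriv (deriv φ)) ω := by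
    rw [pxxx, hux, iteratedDeriv_succ, iteratedDeriv_succ, iteratedDeriv_succ,
      iteratedDeriv_zero, deriv_shift φ hφ1 P d, deriv_shift _ hφ2 P d,
      deriv_shift _ hφ3 P d]
  -- time derivative
  have hpt : pt u t x = c0 * t ^ (c0 - 1) * φ ω + P * (deriv φ ω * -(b * t⁻¹)) := by
    have h1 : HasDerivAt (fun s : ℝ => s ^ c0) (c0 * t ^ (c0 - 1)) t := by
      simpa [mul_comm] using Real.hasDerivAt_rpow_const (p := c0) (Or.inl ht')
    have h2 : HasDerivAt (fun s : ℝ => x - b * Real.log s) (-(b * t⁻¹)) t := by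
      have := ((Real.hasDerivAt_log ht').const_mul b).const_sub x
      simpa using this
    have h3 : HasDerivAt (fun s : ℝ => φ (x - b * Real.log s))
        (deriv φ ω * -(b * t⁻¹)) t := by
      have := (hφ1 ω).hasDerivAt.comp t h2
      simpa [hω, hd, Function.comp_def] using this
    have h4 : HasDerivAt (fun s : ℝ => s ^ c0 * φ (x - b * Real.log s))
        (c0 * t ^ (c0 - 1) * φ (x - b * Real.log t)
          + t ^ c0 * (deriv φ ω * -(b * t⁻¹))) t := h1.mul h3
    have hfun : (fun s : ℝ => u s x) = fun s : ℝ => s ^ c0 * φ (x - b * Real.log s) := by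
      funext s; rw [hu]
    rw [pt, hfun, h4.deriv, hω, hd]
  -- algebraic identities for powers of t
  have hPn : P ^ n = t ^ (-1 : ℝ) := by
    rw [hP, ← Real.rpow_natCast (t ^ c0) n, ← Real.rpow_mul ht.le]
    congr 1
    field_simp [hc0]
    rw [hc0, div_mul_cancel₀ _ hn']
  have hPt : t ^ (-1 : ℝ) * P = t ^ (c0 - 1) := by
    rw [hP, ← Real.rpow_add ht]; ring_nf
  have hPinv : P * t⁻¹ = t ^ (c0 - 1) := by
    have : t⁻¹ = t ^ (-1 : ℝ) := by rw [Real.rpow_neg_one]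
    rw [this, mul_comm, hPt]
  have huval : u t x = P * φ ω := by rw [hu]
  have hode' := hode ω
  rw [hpt, hpx, hpxxx, huval]
  have expand : c0 * t ^ (c0 - 1) * φ ω + P * (deriv φ ω * -(b * t⁻¹))
      + (P * φ ω) ^ n * (P * deriv φ ω) + ε * t ^ (-1:ℝ) * (P * deriv (deriv (deriv φ)) ω)
      = t ^ (c0 - 1) * (ε * deriv (deriv (deriv φ)) ω
        + (φ ω ^ n - a / (n:ℝ)) * deriv φ ω - 1 / (n:ℝ) * φ ω) := by
    have hc : c0 = -(1:ℝ) / (n:ℝ) := hc0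
    rw [mul_pow]
    rw [show P ^ n * φ ω ^ n * (P * deriv φ ω)
        = (P ^ n * P) * (φ ω ^ n * deriv φ ω) by ring]
    rw [hPn, hPt]
    rw [show P * (deriv φ ω * -(b * t⁻¹)) = -(P * t⁻¹) * (b * deriv φ ω) by ring]
    rw [hPinv]
    rw [show ε * t ^ (-1:ℝ) * (P * deriv (deriv (deriv φ)) ω)
        = (t ^ (-1:ℝ) * P) * (ε * deriv (deriv (deriv φ)) ω) by ring]
    rw [hPt, hc, hb]
    ring
  rw [expand, hode', mul_zero]
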